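/- Let x ∈ sl_n(ℂ) be the nilpotent matrix with a single Jordan block (ones on the superdiagonal, zeros elsewhere), and let S be the affine space of matrices of the form: first column arbitrary entries (y_{21},…,y_{n1}) below the (1,1) entry which is 0, ones on the superdiagonal, and zeros elsewhere. Then S is a transverse slice at x for the adjoint action: the tangent space of S at x is complementary to [x, sl_n] in sl_n. Moreover, the map sending y ∈ S to the tuple of nontrivial coefficients of its characteristic polynomial is a bijection (indeed the identity in suitable coordinates) onto ℂ^{n-1}. -/

import Mathlib

/-- The slice at the regular nilpotent: the matrix with ones on the superdiagonal and
arbitrary entries `c` in the first column below the `(1,1)` entry (which is `0`),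
all other entries zero.  `regSlice n 0` is the single-Jordan-block nilpotent. -/
def regSlice (n : ℕ) (c : Fin n → ℂ) : Matrix (Fin (n + 1)) (Fin (n + 1)) ℂ :=
  Matrix.of fun i j =>
    if (j : ℕ) = (i : ℕ) + 1 then 1
    else if (j : ℕ) = 0 then (if h : i = 0 then 0 else c (i.pred h)) else 0

namespace RegSliceAux

variable {n : ℕ}

lemma rs0_apply (i j : Fin (n+1)) :
    regSlice n 0 i j = if (j : ℕ) = (i : ℕ) + 1 then 1 else 0 := by
  simp only [regSlice, Matrix.of_apply, Pi.zero_apply]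
  split_ifs <;> rfl

lemma msl_apply (c : Fin n → ℂ) (i j : Fin (n+1)) :
    (regSlice n c - regSlice n 0) i j =
      if (j : ℕ) = 0 then (if h : i = 0 then 0 else c (i.pred h)) else 0 := by
  simp only [Matrix.sub_apply, regSlice, Matrix.of_apply, Pi.zero_apply]
  split_ifs <;> simp <;> omega

lemma x_mul_apply (z : Matrix (Fin (n+1)) (Fin (n+1)) ℂ) (i j : Fin (n+1)) :
    (regSlice n 0 * z) i j =
      if h : (i : ℕ) + 1 ≤ n then z ⟨(i : ℕ) + 1, by omega⟩ j else 0 := by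
  rw [Matrix.mul_apply]
  split_ifs with h
  · rw [Finset.sum_eq_single (⟨(i:ℕ)+1, by omega⟩ : Fin (n+1))]
    · rw [rs0_apply]; simp
    · intro b _ hb
      have hb' : ¬((b : ℕ) = (i : ℕ) + 1) := by
        intro hc; exact hb (Fin.ext hc)
      rw [rs0_apply, if_neg hb', zero_mul]
    · intro h'; exact absurd (Finset.mem_univ _) h'
  · apply Finset.sum_eq_zero
    intro l _
    have hl : ¬((l : ℕ) = (i : ℕ) + 1) := by have := l.isLt; omega
    rw [rs0_apply, if_neg hl, zero_mul]

lemma mul_x_apply (z : Matrix (Fin (n+1)) (Fin (n+1)) ℂ) (i j : Fin (n+1)) :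
    (z * regSlice n 0) i j =
      if h : 1 ≤ (j : ℕ) then z i ⟨(j : ℕ) - 1, by omega⟩ else 0 := by
  rw [Matrix.mul_apply]
  split_ifs with h
  · rw [Finset.sum_eq_single (⟨(j:ℕ)-1, by omega⟩ : Fin (n+1))]
    · rw [rs0_apply, if_pos (by simp only [Fin.val_mk]; omega), mul_one]
    · intro b _ hb
      have hb' : ¬((j : ℕ) = (b : ℕ) + 1) := by
        intro hc; exact hb (Fin.ext (by simp only [Fin.val_mk]; omega))
      rw [rs0_apply, if_neg hb', mul_zero]
    · intro h'; exact absurd (Finset.mem_univ _) h'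
  · apply Finset.sum_eq_zero
    intro l _
    have hl : ¬((j : ℕ) = (l : ℕ) + 1) := by omega
    rw [rs0_apply, if_neg hl, mul_zero]

lemma pow_apply (k : ℕ) (i j : Fin (n+1)) :
    (regSlice n 0 ^ k) i j = if (j : ℕ) = (i : ℕ) + k then 1 else 0 := by
  induction k generalizing i j with
  | zero =>
    rw [pow_zero, Matrix.one_apply]
    simp [Fin.ext_iff, eq_comm]
  | succ k ih =>
    rw [pow_succ, mul_x_apply]
    split_ifs with h h' h'
    · rw [ih]
      have := i.isLt; have := j.isLt
      split_ifs with h'' <;> simp at h'' ⊢ <;> omega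
    · rw [ih]
      split_ifs with h'' <;> simp at h'' ⊢ <;> omega
    · omega
    · rfl

end RegSliceAux

namespace RegSliceAux
variable {n : ℕ}

lemma trace_pow_msl (c : Fin n → ℂ) (k : Fin n) :
    (regSlice n 0 ^ ((k : ℕ) + 1) * (regSlice n c - regSlice n 0)).trace = c k := by
  rw [Matrix.trace]
  rw [Finset.sum_eq_single (0 : Fin (n+1))]
  · rw [Matrix.diag_apply, Matrix.mul_apply]
    rw [Finset.sum_eq_single (⟨(k:ℕ)+1, by omega⟩ : Fin (n+1))]
    · rw [pow_apply, msl_apply]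
      have h1 : ((⟨(k:ℕ)+1, by omega⟩ : Fin (n+1)) : ℕ) = (k:ℕ)+1 := rfl
      have h2 : (⟨(k:ℕ)+1, by omega⟩ : Fin (n+1)) ≠ 0 := by
        intro hc; rw [Fin.ext_iff] at hc; simp [h1] at hc
      rw [if_pos (by simp [h1]), dif_neg h2, Fin.val_zero, if_pos rfl, one_mul]
      congr 1
    · intro b _ hb
      rw [pow_apply, if_neg, zero_mul]
      intro hc; exact hb (Fin.ext (by simp [hc]))
    · intro h'; exact absurd (Finset.mem_univ _) h'
  · intro i _ hi
    rw [Matrix.diag_apply, Matrix.mul_apply]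
    apply Finset.sum_eq_zero
    intro l _
    rw [msl_apply, if_neg, mul_zero]
    intro hc; exact hi (Fin.ext (by simpa using hc))
  · intro h'; exact absurd (Finset.mem_univ _) h'

lemma part1 (c : Fin n → ℂ)
    (h : ∃ z : Matrix (Fin (n + 1)) (Fin (n + 1)) ℂ, z.trace = 0 ∧
        regSlice n c - regSlice n 0 = regSlice n 0 * z - z * regSlice n 0) : c = 0 := by
  obtain ⟨z, -, hz⟩ := h
  funext k
  have h1 := trace_pow_msl c k
  rw [hz] at h1
  rw [mul_sub, Matrix.trace_sub, ← mul_assoc, ← pow_succ] at h1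
  rw [show regSlice n 0 ^ ((k:ℕ)+1) * (z * regSlice n 0)
      = (regSlice n 0 ^ ((k:ℕ)+1) * z) * regSlice n 0 by rw [mul_assoc]] at h1
  rw [Matrix.trace_mul_cycle, ← pow_succ'] at h1
  rw [sub_self] at h1
  exact h1.symm

end RegSliceAux

namespace RegSliceAux
open Matrix
variable {n : ℕ}

lemma col_succ (c : Fin n → ℂ) (j : Fin (n+1)) (hj : 1 ≤ (j : ℕ)) :
    regSlice n c *ᵥ Pi.single j 1 = Pi.single (⟨(j:ℕ) - 1, by omega⟩ : Fin (n+1)) 1 := by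
  rw [Matrix.mulVec_single_one]
  funext i
  rw [Matrix.col_apply, Pi.single_apply]
  simp only [regSlice, Matrix.of_apply]
  have := i.isLt; have := j.isLt
  split_ifs with h h' h'' h'' <;>
    first
      | rfl
      | (exfalso; simp only [Fin.ext_iff, Fin.val_mk] at *; omega)

lemma col_zero (c : Fin n → ℂ) :
    regSlice n c *ᵥ Pi.single (0 : Fin (n+1)) 1 =
      fun i => if h : i = 0 then 0 else c (i.pred h) := by
  rw [Matrix.mulVec_single_one]
  funext i
  rw [Matrix.col_apply]
  simp only [regSlice, Matrix.of_apply, Fin.val_zero]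
  rw [if_neg (by omega)]
  simp

lemma pow_mulVec_last (c : Fin n → ℂ) (k : ℕ) (hk : k ≤ n) :
    (regSlice n c ^ k) *ᵥ Pi.single (Fin.last n) 1 =
      Pi.single (⟨n - k, by omega⟩ : Fin (n+1)) 1 := by
  induction k with
  | zero =>
    rw [pow_zero, Matrix.one_mulVec]
    congr 1
  | succ k ih =>
    rw [pow_succ', ← Matrix.mulVec_mulVec, ih (by omega)]
    rw [col_succ c _ (by simp only [Fin.val_mk]; omega)]
    congr 1
    all_goals simp only [Fin.ext_iff, Fin.val_mk]
    all_goals omega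


lemma pow_succ_mulVec_last (c : Fin n → ℂ) :
    (regSlice n c ^ (n+1)) *ᵥ Pi.single (Fin.last n) 1 =
      fun i => if h : i = 0 then 0 else c (i.pred h) := by
  rw [pow_succ', ← Matrix.mulVec_mulVec, pow_mulVec_last c n le_rfl]
  rw [show (⟨n - n, by omega⟩ : Fin (n+1)) = 0 from by rw [Fin.ext_iff]; simp]
  exact col_zero c

lemma sum_mulVec {ι : Type*} (s : Finset ι) (A : ι → Matrix (Fin (n+1)) (Fin (n+1)) ℂ)
    (v : Fin (n+1) → ℂ) : (∑ i ∈ s, A i) *ᵥ v = ∑ i ∈ s, A i *ᵥ v := by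
  funext j
  simp only [Matrix.mulVec, dotProduct, Finset.sum_apply, Matrix.sum_apply,
    Finset.sum_mul]
  rw [Finset.sum_comm]

lemma charpoly_coeff (c : Fin n → ℂ) (k : Fin n) :
    (regSlice n c).charpoly.coeff k = -c ⟨n - 1 - (k:ℕ), by omega⟩ := by
  set M := regSlice n c with hM
  have hdeg : M.charpoly.natDegree = n + 1 := by
    rw [Matrix.charpoly_natDegree_eq_dim, Fintype.card_fin]
  have hCH : (Polynomial.aeval M) M.charpoly = 0 := Matrix.aeval_self_charpoly M
  rw [Polynomial.aeval_eq_sum_range, hdeg] at hCH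
  have hv := congrArg (fun A : Matrix (Fin (n+1)) (Fin (n+1)) ℂ =>
    (A *ᵥ Pi.single (Fin.last n) 1) (⟨n - (k:ℕ), by omega⟩ : Fin (n+1))) hCH
  simp only [Matrix.zero_mulVec, Pi.zero_apply] at hv
  rw [sum_mulVec] at hv
  simp only [Matrix.smul_mulVec, Finset.sum_apply, Pi.smul_apply, smul_eq_mul] at hv
  rw [Finset.sum_range_succ, pow_succ_mulVec_last c] at hv
  have hne : (⟨n - (k:ℕ), by omega⟩ : Fin (n+1)) ≠ 0 := by
    intro hzero
    rw [Fin.ext_iff] at hzero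
    simp only [Fin.val_mk, Fin.val_zero] at hzero
    have := k.isLt; omega
  simp only [dif_neg hne] at hv
  have hmon := (Matrix.charpoly_monic M).coeff_natDegree
  rw [hdeg] at hmon
  have hhead : ∑ i ∈ Finset.range (n+1),
      M.charpoly.coeff i * ((M ^ i *ᵥ Pi.single (Fin.last n) 1)
        (⟨n - (k:ℕ), by omega⟩ : Fin (n+1)))
      = M.charpoly.coeff k := by
    rw [Finset.sum_eq_single_of_mem ((k:ℕ))
      (Finset.mem_range.mpr (by have := k.isLt; omega))]
    · rw [pow_mulVec_last c _ (by have := k.isLt; omega), Pi.single_apply, if_pos rfl, mul_one]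
    · intro i hi hik
      rw [Finset.mem_range] at hi
      rw [pow_mulVec_last c _ (by omega), Pi.single_apply, if_neg, mul_zero]
      simp only [Fin.ext_iff, Fin.val_mk]
      have := k.isLt; omega
  rw [hhead, hmon, one_mul] at hv
  have hpred : (⟨n - (k:ℕ), by omega⟩ : Fin (n+1)).pred hne
      = ⟨n - 1 - (k:ℕ), by omega⟩ := by
    simp only [Fin.ext_iff, Fin.coe_pred, Fin.val_mk]
    omega
  rw [hpred] at hv
  exact eq_neg_of_add_eq_zero_left hv


lemma part3 : Function.Bijective
    (fun c : Fin n → ℂ => fun k : Fin n => (regSlice n c).charpoly.coeff k) := by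
  apply Function.bijective_iff_has_inverse.mpr
  refine ⟨fun d i => -d ⟨n - 1 - (i:ℕ), by omega⟩, fun c => ?_, fun d => ?_⟩
  · funext i
    show -((regSlice n c).charpoly.coeff ((⟨n - 1 - (i:ℕ), by omega⟩ : Fin n) : ℕ)) = c i
    rw [charpoly_coeff, neg_neg]
    congr 1
    simp only [Fin.ext_iff, Fin.val_mk]
    have := i.isLt; omega
  · funext k
    show (regSlice n (fun i => -d ⟨n - 1 - (i:ℕ), by omega⟩)).charpoly.coeff k = d k
    rw [charpoly_coeff, neg_neg]
    congr 1
    simp only [Fin.ext_iff, Fin.val_mk]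
    have := k.isLt; omega

end RegSliceAux

namespace RegSliceAux
open Matrix
variable {n : ℕ}

noncomputable def Wnat (n : ℕ) (w : Matrix (Fin (n+1)) (Fin (n+1)) ℂ) (p q : ℕ) : ℂ :=
  if h : p ≤ n ∧ q ≤ n then w ⟨p, by omega⟩ ⟨q, by omega⟩ else 0

noncomputable def Znat (n : ℕ) (w : Matrix (Fin (n+1)) (Fin (n+1)) ℂ) (i j : ℕ) : ℂ :=
  ∑ s ∈ Finset.range (n+1), if s ≤ j ∧ s + 1 ≤ i then Wnat n w (i-1-s) (j-s) else 0

lemma Wnat_apply (w : Matrix (Fin (n+1)) (Fin (n+1)) ℂ) (i j : Fin (n+1)) :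
    Wnat n w (i : ℕ) (j : ℕ) = w i j := by
  rw [Wnat, dif_pos ⟨by omega, by omega⟩]

lemma sum_range_trunc (g : ℕ → ℂ) (t N : ℕ) (h : t < N) :
    ∑ q ∈ Finset.range N, (if q ≤ t then g q else 0) = ∑ q ∈ Finset.range (t+1), g q := by
  rw [← Finset.sum_subset (Finset.range_subset_range.mpr (by omega : t + 1 ≤ N))]
  · apply Finset.sum_congr rfl
    intro q hq
    rw [Finset.mem_range] at hq
    rw [if_pos (by omega)]
  · intro q hq hq'
    rw [Finset.mem_range] at hq hq'
    rw [if_neg (by omega)]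

lemma Znat_succ (w : Matrix (Fin (n+1)) (Fin (n+1)) ℂ) (i j : ℕ) (hi : i ≤ n) :
    Znat n w (i+1) j = Wnat n w i j + (if 1 ≤ j then Znat n w i (j-1) else 0) := by
  rw [Znat, Finset.sum_range_succ']
  rw [if_pos (by omega)]
  simp only [Nat.sub_zero, Nat.add_sub_cancel]
  rw [add_comm]
  congr 1
  split_ifs with hj
  · rw [Znat, Finset.sum_range_succ, if_neg (by omega), add_zero]
    apply Finset.sum_congr rfl
    intro s hs
    rw [Finset.mem_range] at hs
    have h1 : j - (s+1) = j - 1 - s := by omega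
    have h2 : i - (s+1) = i - 1 - s := by omega
    rw [h1, h2]
    apply if_congr (by omega) rfl rfl
  · apply Finset.sum_eq_zero
    intro s hs
    rw [if_neg (by omega)]


lemma hw_range (w : Matrix (Fin (n+1)) (Fin (n+1)) ℂ)
    (hw : ∀ d : ℕ, d ≤ n →
      ∑ q : Fin (n+1), (if h : (q:ℕ) + d ≤ n then w ⟨(q:ℕ)+d, by omega⟩ q else 0) = 0)
    (d : ℕ) (hd : d ≤ n) :
    ∑ q ∈ Finset.range (n+1), (if q + d ≤ n then Wnat n w (q+d) q else 0) = 0 := by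
  rw [← Fin.sum_univ_eq_sum_range (fun q => if q + d ≤ n then Wnat n w (q+d) q else 0)]
  refine Eq.trans ?_ (hw d hd)
  apply Finset.sum_congr rfl
  intro q _
  split_ifs with h
  · rw [Wnat, dif_pos ⟨by omega, by omega⟩]
  · rfl

lemma Znat_last (w : Matrix (Fin (n+1)) (Fin (n+1)) ℂ)
    (hw : ∀ d : ℕ, d ≤ n →
      ∑ q : Fin (n+1), (if h : (q:ℕ) + d ≤ n then w ⟨(q:ℕ)+d, by omega⟩ q else 0) = 0)
    (j : ℕ) (hj : j ≤ n) :
    Wnat n w n j + (if 1 ≤ j then Znat n w n (j-1) else 0) = 0 := by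
  have key := hw_range w hw (n - j) (by omega)
  have hcong : ∀ q, (if q + (n - j) ≤ n then Wnat n w (q + (n-j)) q else 0)
      = (if q ≤ j then Wnat n w (q + (n-j)) q else 0) := by
    intro q; apply if_congr (by omega) rfl rfl
  rw [Finset.sum_congr rfl (fun q _ => hcong q)] at key
  rw [sum_range_trunc _ j (n+1) (by omega)] at key
  rw [Finset.sum_range_succ] at key
  have hWnj : Wnat n w (j + (n - j)) j = Wnat n w n j := by
    congr 1; omega
  rw [hWnj] at key
  split_ifs with h1
  · -- 1 ≤ j : Znat n w n (j-1) = ∑_{q<j} Wnat (q+(n-j)) q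
    have hz : Znat n w n (j-1) = ∑ q ∈ Finset.range j, Wnat n w (q + (n-j)) q := by
      rw [Znat]
      have : ∀ s, (if s ≤ j - 1 ∧ s + 1 ≤ n then Wnat n w (n-1-s) (j-1-s) else 0)
          = (if s ≤ j - 1 then Wnat n w (n-1-s) (j-1-s) else 0) := by
        intro s; apply if_congr (by omega) rfl rfl
      rw [Finset.sum_congr rfl (fun s _ => this s)]
      rw [sum_range_trunc _ (j-1) (n+1) (by omega)]
      rw [show j - 1 + 1 = j by omega]
      rw [← Finset.sum_range_reflect]
      apply Finset.sum_congr rfl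
      intro s hs
      rw [Finset.mem_range] at hs
      congr 1 <;> omega
    rw [hz]
    linear_combination key
  · -- j = 0
    rw [add_zero]
    have hj0 : j = 0 := by omega
    subst hj0
    simpa using key


lemma exists_comm (w : Matrix (Fin (n+1)) (Fin (n+1)) ℂ)
    (hw : ∀ d : ℕ, d ≤ n →
      ∑ q : Fin (n+1), (if h : (q:ℕ) + d ≤ n then w ⟨(q:ℕ)+d, by omega⟩ q else 0) = 0) :
    ∃ z : Matrix (Fin (n+1)) (Fin (n+1)) ℂ,
      w = regSlice n 0 * z - z * regSlice n 0 := by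
  refine ⟨Matrix.of (fun i j => Znat n w (i : ℕ) (j : ℕ)), ?_⟩
  ext i j
  rw [Matrix.sub_apply, x_mul_apply, mul_x_apply]
  by_cases hi : (i : ℕ) + 1 ≤ n
  · rw [dif_pos hi]
    simp only [Matrix.of_apply, Fin.val_mk]
    rw [Znat_succ w (i : ℕ) (j : ℕ) (by omega)]
    rw [Wnat_apply]
    split_ifs with hj
    · rw [add_sub_cancel_right]
    · rw [add_zero, sub_zero]
  · rw [dif_neg hi]
    have hin : (i : ℕ) = n := by have := i.isLt; omega
    have hl := Znat_last w hw (j : ℕ) (by have := j.isLt; omega)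
    rw [zero_sub, eq_neg_iff_add_eq_zero]
    simp only [Matrix.of_apply, Fin.val_mk]
    rw [← Wnat_apply w i j, hin]
    split_ifs with hj
    · rw [if_pos hj] at hl
      exact hl
    · rw [if_neg hj, add_zero] at hl
      rw [add_zero]
      exact hl


lemma part2 (m : Matrix (Fin (n+1)) (Fin (n+1)) ℂ) (hm : m.trace = 0) :
    ∃ (c : Fin n → ℂ) (z : Matrix (Fin (n+1)) (Fin (n+1)) ℂ), z.trace = 0 ∧
      m = (regSlice n c - regSlice n 0) + (regSlice n 0 * z - z * regSlice n 0) := by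
  set c : Fin n → ℂ := fun k =>
    ∑ q : Fin (n+1), if h : (q:ℕ) + ((k:ℕ)+1) ≤ n
      then m ⟨(q:ℕ) + ((k:ℕ)+1), by omega⟩ q else 0 with hc
  set w := m - (regSlice n c - regSlice n 0) with hwdef
  have hw : ∀ d : ℕ, d ≤ n →
      ∑ q : Fin (n+1), (if h : (q:ℕ)+d ≤ n then w ⟨(q:ℕ)+d, by omega⟩ q else 0) = 0 := by
    intro d hd
    have hsplit : ∀ q : Fin (n+1),
        (if h : (q:ℕ)+d ≤ n then w ⟨(q:ℕ)+d, by omega⟩ q else 0)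
        = (if h : (q:ℕ)+d ≤ n then m ⟨(q:ℕ)+d, by omega⟩ q else 0)
          - (if h : (q:ℕ)+d ≤ n
              then (regSlice n c - regSlice n 0) ⟨(q:ℕ)+d, by omega⟩ q else 0) := by
      intro q
      rw [hwdef]
      split_ifs with h
      · rw [Matrix.sub_apply]
      · rw [sub_zero]
    rw [Finset.sum_congr rfl (fun q _ => hsplit q), Finset.sum_sub_distrib]
    rcases Nat.eq_zero_or_pos d with h0 | hpos
    · subst h0
      have e1 : ∑ q : Fin (n+1),
          (if h : (q:ℕ)+0 ≤ n then m ⟨(q:ℕ)+0, by omega⟩ q else 0) = m.trace := by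
        rw [Matrix.trace]
        apply Finset.sum_congr rfl
        intro q _
        rw [dif_pos (by omega), Matrix.diag_apply]
        congr 1
      have e2 : ∑ q : Fin (n+1),
          (if h : (q:ℕ)+0 ≤ n
            then (regSlice n c - regSlice n 0) ⟨(q:ℕ)+0, by omega⟩ q else 0) = 0 := by
        apply Finset.sum_eq_zero
        intro q _
        rw [dif_pos (by omega), msl_apply]
        split_ifs with h1 h2
        · rfl
        · exact absurd (Fin.ext (by simpa using h1)) h2
        · rfl
      rw [e1, e2, hm, sub_self]
    · obtain ⟨e, rfl⟩ : ∃ e, d = e + 1 := ⟨d-1, by omega⟩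
      have e1 : ∑ q : Fin (n+1),
          (if h : (q:ℕ)+(e+1) ≤ n then m ⟨(q:ℕ)+(e+1), by omega⟩ q else 0)
          = c ⟨e, by omega⟩ := rfl
      have e2 : ∑ q : Fin (n+1),
          (if h : (q:ℕ)+(e+1) ≤ n
            then (regSlice n c - regSlice n 0) ⟨(q:ℕ)+(e+1), by omega⟩ q else 0)
          = c ⟨e, by omega⟩ := by
        rw [Finset.sum_eq_single (0 : Fin (n+1))]
        · rw [dif_pos (by simpa using hd), msl_apply]
          rw [if_pos (by simp)]
          rw [dif_neg (by
            intro hzero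
            rw [Fin.ext_iff] at hzero
            simp at hzero)]
          congr 1
          rw [Fin.ext_iff, Fin.coe_pred]
          simp
        · intro q _ hq
          split_ifs with h
          · rw [msl_apply, if_neg, ]
            intro hzero
            exact hq (Fin.ext (by simpa using hzero))
          · rfl
        · intro h'; exact absurd (Finset.mem_univ _) h'
      rw [e1, e2, sub_self]
  obtain ⟨z, hz⟩ := exists_comm w hw
  refine ⟨c, z - (z.trace / ((n:ℂ)+1)) • 1, ?_, ?_⟩
  · have hcard : (Matrix.trace (1 : Matrix (Fin (n+1)) (Fin (n+1)) ℂ)) = (n:ℂ)+1 := by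
      rw [Matrix.trace_one, Fintype.card_fin]
      push_cast
      ring
    rw [Matrix.trace_sub, Matrix.trace_smul, hcard, smul_eq_mul]
    have hne : ((n:ℂ)+1) ≠ 0 := by
      intro hcon
      have : ((n:ℂ)+1) = ((n+1 : ℕ) : ℂ) := by push_cast; ring
      rw [this, Nat.cast_eq_zero] at hcon
      omega
    field_simp
    ring
  · have hcomm : regSlice n 0 * (z - (z.trace / ((n:ℂ)+1)) • 1)
        - (z - (z.trace / ((n:ℂ)+1)) • 1) * regSlice n 0
        = regSlice n 0 * z - z * regSlice n 0 := by
      rw [Matrix.mul_sub, Matrix.sub_mul, Matrix.mul_smul, Matrix.smul_mul,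
        Matrix.mul_one, Matrix.one_mul]
      abel
    rw [hcomm, ← hz, hwdef]
    abel

end RegSliceAux

/-- Let `x ∈ sl_{n+1}(ℂ)` be the nilpotent with a single Jordan block and let `S` be the
affine space of matrices `regSlice n c`.  Then `S` is a transverse slice at `x` for the
adjoint action: the tangent space `{regSlice n c - x}` meets `[x, sl_{n+1}]` trivially and
together they span `sl_{n+1}`.  Moreover the map sending `y ∈ S` to the tuple of
nontrivial coefficients of its characteristic polynomial is a bijection onto `ℂⁿ`. -/
theorem regular_slice_transverse (n : ℕ) :
    (∀ c : Fin n → ℂ,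
      (∃ z : Matrix (Fin (n + 1)) (Fin (n + 1)) ℂ, z.trace = 0 ∧
        regSlice n c - regSlice n 0 = regSlice n 0 * z - z * regSlice n 0) → c = 0) ∧
    (∀ m : Matrix (Fin (n + 1)) (Fin (n + 1)) ℂ, m.trace = 0 →
      ∃ (c : Fin n → ℂ) (z : Matrix (Fin (n + 1)) (Fin (n + 1)) ℂ), z.trace = 0 ∧
        m = (regSlice n c - regSlice n 0) + (regSlice n 0 * z - z * regSlice n 0)) ∧
    Function.Bijective
      (fun c : Fin n → ℂ => fun k : Fin n => (regSlice n c).charpoly.coeff k) := by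
  exact ⟨fun c h => RegSliceAux.part1 c h, fun m hm => RegSliceAux.part2 m hm,
    RegSliceAux.part3⟩
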